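/- Let a, R, B, Bᴺ > 0 and 0 < f < 1. Define t_J = √(2Bᴺ/(a·(1+f)·R)), d_{J,L} = a·R·t_J²/2, d_{J,S} = a·R·f·t_J²/2, C_J = √(2·Bᴺ·(1+f)·R/a), C_{J,L} = C_J/(1+f), C_{J,S} = f·C_J/(1+f), Tr_L = √(2·B·a/R), and Tr_S = √(2·B·a/(R·f)). Then (Bᴺ + d_{J,S} − d_{J,L} − C_{J,S}·Tr_S + C_{J,L}·Tr_L)/2 = Bᴺ·f/(1+f) + √(Bᴺ·B)·(1 − √f)/√(1+f). In particular, the Nash bargaining payment of the large rollup depends only on B, Bᴺ and f, not on R or a. -/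

import Mathlib

/-- For `a, R, B, Bᴺ > 0` and `0 < f < 1`, with the joint-blob
quantities `t_J, d_{J,L}, d_{J,S}, C_J, C_{J,L}, C_{J,S}` and the stand-alone
per-transaction costs `Tr_L, Tr_S` as in the model, the Nash bargaining payment
of the large rollup simplifies to
`(Bᴺ + d_{J,S} − d_{J,L} − C_{J,S}·Tr_S + C_{J,L}·Tr_L)/2
  = Bᴺ·f/(1+f) + √(Bᴺ·B)·(1 − √f)/√(1+f)`,
which depends only on `B`, `Bᴺ` and `f`. -/
theorem nash_payment_formula
    (a R B BN f : ℝ) (ha : 0 < a) (hR : 0 < R) (hB : 0 < B) (hBN : 0 < BN)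
    (hf0 : 0 < f) (hf1 : f < 1)
    (tJ dJL dJS CJ CJL CJS TrL TrS : ℝ)
    (htJ : tJ = Real.sqrt (2 * BN / (a * (1 + f) * R)))
    (hdJL : dJL = a * R * tJ ^ 2 / 2)
    (hdJS : dJS = a * R * f * tJ ^ 2 / 2)
    (hCJ : CJ = Real.sqrt (2 * BN * (1 + f) * R / a))
    (hCJL : CJL = CJ / (1 + f))
    (hCJS : CJS = f * CJ / (1 + f))
    (hTrL : TrL = Real.sqrt (2 * B * a / R))
    (hTrS : TrS = Real.sqrt (2 * B * a / (R * f))) :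
    (BN + dJS - dJL - CJS * TrS + CJL * TrL) / 2 =
      BN * f / (1 + f) +
        Real.sqrt (BN * B) * (1 - Real.sqrt f) / Real.sqrt (1 + f) := by
  have h1f : (0:ℝ) < 1 + f := by linarith
  have hsf : (0:ℝ) < Real.sqrt f := Real.sqrt_pos.mpr hf0
  have hs1f : (0:ℝ) < Real.sqrt (1 + f) := Real.sqrt_pos.mpr h1f
  have htJ2 : tJ ^ 2 = 2 * BN / (a * (1 + f) * R) := by
    rw [htJ, Real.sq_sqrt (by positivity)]
  have hCJTrL : CJ * TrL = 2 * Real.sqrt (BN * B) * Real.sqrt (1 + f) := by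
    rw [hCJ, hTrL, ← Real.sqrt_mul (by positivity)]
    have h : 2 * BN * (1 + f) * R / a * (2 * B * a / R)
        = (2 * Real.sqrt (BN * B) * Real.sqrt (1 + f)) ^ 2 := by
      rw [mul_pow, mul_pow, Real.sq_sqrt (by positivity), Real.sq_sqrt (by positivity)]
      field_simp
    rw [h, Real.sqrt_sq (by positivity)]
  have hCJTrS : CJ * TrS = 2 * Real.sqrt (BN * B) * Real.sqrt (1 + f) / Real.sqrt f := by
    rw [hCJ, hTrS, ← Real.sqrt_mul (by positivity)]
    have h : 2 * BN * (1 + f) * R / a * (2 * B * a / (R * f))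
        = (2 * Real.sqrt (BN * B) * Real.sqrt (1 + f) / Real.sqrt f) ^ 2 := by
      rw [div_pow, mul_pow, mul_pow, Real.sq_sqrt (by positivity),
        Real.sq_sqrt (by positivity), Real.sq_sqrt hf0.le]
      field_simp
    rw [h, Real.sqrt_sq (by positivity)]
  have hfsq : Real.sqrt f * Real.sqrt f = f := Real.mul_self_sqrt hf0.le
  have h1fsq : Real.sqrt (1 + f) * Real.sqrt (1 + f) = 1 + f := Real.mul_self_sqrt h1f.le
  have hdiff : dJS - dJL = BN * (f - 1) / (1 + f) := by
    rw [hdJS, hdJL, htJ2]; field_simp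
  have hA : CJS * TrS = 2 * Real.sqrt f * Real.sqrt (BN * B) / Real.sqrt (1 + f) := by
    rw [hCJS, div_mul_eq_mul_div, mul_assoc, hCJTrS]
    rw [div_eq_div_iff (ne_of_gt h1f) (ne_of_gt hs1f)]
    field_simp
    linear_combination f * h1fsq - (1 + f) * hfsq
  have hBterm : CJL * TrL = 2 * Real.sqrt (BN * B) / Real.sqrt (1 + f) := by
    rw [hCJL, div_mul_eq_mul_div, hCJTrL]
    rw [div_eq_div_iff (ne_of_gt h1f) (ne_of_gt hs1f)]
    field_simp
    linear_combination h1fsq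
  have key : BN + dJS - dJL - CJS * TrS + CJL * TrL
      = BN + (dJS - dJL) - CJS * TrS + CJL * TrL := by ring
  rw [key, hdiff, hA, hBterm]
  field_simp
  ring
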